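/- Let k, r ≥ 2 and let s_1, …, s_k be distinct unit vectors in R^d. Then there exists a constant η > 0, depending only on {s_1,…,s_k} and r, such that for every nonzero w ∈ R^d and every θ ∈ (0, π/2), writing U for the linear span of {g(x) : x ∈ W_θ} and π_U for the orthogonal projection of R^d onto U, one has ‖π_U(w)‖ ≤ η ‖w‖ sin θ. (Equivalently, the angle φ between w and the orthogonal complement U^⊥ of U satisfies sin φ ≤ η sin θ.) -/

import Mathlib

attribute [local instance] Classical.propDecidable

open scoped RealInnerProductSpace

/-- The defining condition of the space `X` of swaps: `x ∈ ℤ^k` with all `|x i| ≤ 2r-2`,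
`∑ x i = 0` and `∑ |x i| ≤ 4r-4`. -/
def SwapCond (k r : ℕ) (x : Fin k → ℤ) : Prop :=
  (∀ i, |x i| ≤ 2 * (r : ℤ) - 2) ∧ (∑ i, x i = 0) ∧ (∑ i, |x i| ≤ 4 * (r : ℤ) - 4)

/-- `g x = ∑ i, x i • s i`. -/
noncomputable def gMap {k d : ℕ} (s : Fin k → EuclideanSpace ℝ (Fin d))
    (x : Fin k → ℤ) : EuclideanSpace ℝ (Fin d) :=
  ∑ i, (x i : ℝ) • s i

/-- The sine of the angle `θ(x)` between `g x` and the hyperplane `w^⊥`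
(`0` by convention when `g x = 0`, matching division-by-zero conventions). -/
noncomputable def sinAngle {k d : ℕ} (s : Fin k → EuclideanSpace ℝ (Fin d))
    (w : EuclideanSpace ℝ (Fin d)) (x : Fin k → ℤ) : ℝ :=
  |⟪gMap s x, w⟫| / (‖gMap s x‖ * ‖w‖)

/-- The constant `β₀ = L / min {‖g x‖ : x ∈ X, g x ≠ 0}`, with `L = 8(r-1)²`. -/
noncomputable def beta0 (k r : ℕ) {d : ℕ} (s : Fin k → EuclideanSpace ℝ (Fin d)) : ℝ :=
  8 * ((r : ℝ) - 1) ^ 2 /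
    sInf {t : ℝ | ∃ x, SwapCond k r x ∧ gMap s x ≠ 0 ∧ t = ‖gMap s x‖}

/-- Key quantitative lemma: for any finite spanning set `S`, the norm of the orthogonal
projection of `w` onto `span S` is controlled by a uniform constant times `ε`, whenever every
vector of `S` makes inner product at most `ε ‖v‖ ‖w‖` with `w`. -/
lemma norm_orthogonalProjection_span_le {E : Type*} [NormedAddCommGroup E]
    [InnerProductSpace ℝ E] [FiniteDimensional ℝ E] (S : Finset E) :
    ∃ C : ℝ, 0 < C ∧ ∀ (w : E) (ε : ℝ), 0 ≤ ε →
      (∀ v ∈ S, |⟪v, w⟫| ≤ ε * (‖v‖ * ‖w‖)) →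
      ‖(Submodule.orthogonalProjection (Submodule.span ℝ (S : Set E)) w : E)‖ ≤ C * ε * ‖w‖ := by
  set K := Submodule.span ℝ (S : Set E) with hK
  set T : (S → ℝ) →ₗ[ℝ] E := Fintype.linearCombination ℝ (Subtype.val : S → E) with hT
  have hTmem : ∀ c : S → ℝ, T c ∈ K := by
    intro c
    rw [hT, Fintype.linearCombination_apply]
    exact Submodule.sum_mem _ fun v _ =>
      Submodule.smul_mem _ _ (Submodule.subset_span v.2)
  set T' : (S → ℝ) →ₗ[ℝ] K := T.codRestrict K hTmem with hT'
  have hsurj : Function.Surjective T' := by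
    intro u
    have hu : (u : E) ∈ LinearMap.range T := by
      rw [hT, Fintype.range_linearCombination, Subtype.range_coe]
      exact u.2
    obtain ⟨c, hc⟩ := hu
    exact ⟨c, Subtype.ext hc⟩
  obtain ⟨σ, hσ⟩ := T'.exists_rightInverse_of_surjective (LinearMap.range_eq_top.2 hsurj)
  set σ' := LinearMap.toContinuousLinearMap σ with hσ'
  refine ⟨‖σ'‖ * (∑ v ∈ S, ‖v‖) + 1, by positivity, fun w ε hε hyp => ?_⟩
  set u : K := Submodule.orthogonalProjection K w with hu
  by_cases h0 : (u : E) = 0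
  · rw [h0, norm_zero]; positivity
  set c : S → ℝ := σ u with hc
  have hrep : ∑ v : S, c v • (v : E) = (u : E) := by
    have h1 := congrArg (fun f => (f u : K)) hσ
    simp only [LinearMap.comp_apply, LinearMap.id_apply] at h1
    have h2 : T' (σ u) = u := h1
    have h3 := congrArg (Subtype.val) h2
    simpa [hT', hT, Fintype.linearCombination_apply] using h3
  have hcv : ∀ v : S, |c v| ≤ ‖σ'‖ * ‖(u : E)‖ := by
    intro v
    calc |c v| ≤ ‖c‖ := by
          simpa using norm_le_pi_norm c v
      _ = ‖σ' u‖ := rfl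
      _ ≤ ‖σ'‖ * ‖u‖ := σ'.le_opNorm u
      _ = ‖σ'‖ * ‖(u : E)‖ := by rw [Submodule.norm_coe]
  have hinner : ⟪(u : E), w⟫ = ‖(u : E)‖ ^ 2 := by
    have horth : ⟪(u : E), w - (u : E)⟫ = 0 := by
      have hm := Submodule.sub_starProjection_mem_orthogonal (K := K) w
      exact hm (u : E) u.2
    have hw : ⟪(u : E), w⟫ = ⟪(u : E), (u : E)⟫ + ⟪(u : E), w - (u : E)⟫ := by
      rw [← inner_add_right]
      congr 1
      abel
    rw [hw, horth, add_zero, real_inner_self_eq_norm_sq]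
  have hsum : ⟪(u : E), w⟫ = ∑ v : S, c v * ⟪(v : E), w⟫ := by
    rw [← hrep, sum_inner]
    simp [real_inner_smul_left]
  have hbound : ‖(u : E)‖ ^ 2 ≤ (‖σ'‖ * ‖(u : E)‖) * (ε * ‖w‖) * ∑ v ∈ S, ‖v‖ := by
    rw [← hinner, hsum]
    calc ∑ v : S, c v * ⟪(v : E), w⟫ ≤ ∑ v : S, |c v * ⟪(v : E), w⟫| :=
          Finset.sum_le_sum fun v _ => le_abs_self _
      _ = ∑ v : S, |c v| * |⟪(v : E), w⟫| := by simp [abs_mul]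
      _ ≤ ∑ v : S, (‖σ'‖ * ‖(u : E)‖) * (ε * (‖(v : E)‖ * ‖w‖)) := by
          refine Finset.sum_le_sum fun v _ => mul_le_mul (hcv v) (hyp v v.2)
            (abs_nonneg _) (by positivity)
      _ = (‖σ'‖ * ‖(u : E)‖) * (ε * ‖w‖) * ∑ v : S, ‖(v : E)‖ := by
          rw [Finset.mul_sum]; congr 1; ext v; ring
      _ = (‖σ'‖ * ‖(u : E)‖) * (ε * ‖w‖) * ∑ v ∈ S, ‖v‖ := by
          congr 1
          exact Finset.sum_attach S (fun v => ‖v‖)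
  have hupos : 0 < ‖(u : E)‖ := norm_pos_iff.2 h0
  have h2 : ‖(u : E)‖ * ‖(u : E)‖ ≤ (‖σ'‖ * (∑ v ∈ S, ‖v‖) * ε * ‖w‖) * ‖(u : E)‖ := by
    calc ‖(u : E)‖ * ‖(u : E)‖ = ‖(u : E)‖ ^ 2 := (sq ‖(u : E)‖).symm
      _ ≤ (‖σ'‖ * ‖(u : E)‖) * (ε * ‖w‖) * ∑ v ∈ S, ‖v‖ := hbound
      _ = (‖σ'‖ * (∑ v ∈ S, ‖v‖) * ε * ‖w‖) * ‖(u : E)‖ := by ring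
  have h3 : ‖(u : E)‖ ≤ ‖σ'‖ * (∑ v ∈ S, ‖v‖) * ε * ‖w‖ := le_of_mul_le_mul_right h2 hupos
  have hA : ‖σ'‖ * (∑ v ∈ S, ‖v‖) ≤ ‖σ'‖ * (∑ v ∈ S, ‖v‖) + 1 := by linarith
  calc ‖(u : E)‖ ≤ ‖σ'‖ * (∑ v ∈ S, ‖v‖) * ε * ‖w‖ := h3
    _ ≤ (‖σ'‖ * (∑ v ∈ S, ‖v‖) + 1) * ε * ‖w‖ :=
        mul_le_mul_of_nonneg_right (mul_le_mul_of_nonneg_right hA hε) (norm_nonneg w)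

/-- The set of swaps is finite. -/
lemma swapCond_finite (k r : ℕ) : {x : Fin k → ℤ | SwapCond k r x}.Finite := by
  apply Set.Finite.subset
    (Set.finite_Icc (fun _ : Fin k => -(2 * (r : ℤ) - 2)) (fun _ => 2 * (r : ℤ) - 2))
  intro x hx
  rw [Set.mem_Icc]
  constructor <;> intro i <;> have := hx.1 i <;>
    simp only [Pi.le_def] at * <;> [exact neg_le_of_abs_le this; exact le_of_abs_le this]

theorem projection_onto_W_theta_span_small (k r d : ℕ) (hk : 2 ≤ k) (hr : 2 ≤ r)
    (s : Fin k → EuclideanSpace ℝ (Fin d)) (hs : ∀ i, ‖s i‖ = 1)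
    (hinj : Function.Injective s) :
    ∃ η : ℝ, 0 < η ∧
      ∀ w : EuclideanSpace ℝ (Fin d), w ≠ 0 →
        ∀ θ : ℝ, 0 < θ → θ < Real.pi / 2 →
          ‖(Submodule.orthogonalProjection
              (Submodule.span ℝ
                {v : EuclideanSpace ℝ (Fin d) |
                  ∃ x, SwapCond k r x ∧ sinAngle s w x < Real.sin θ ∧ v = gMap s x})
              w : EuclideanSpace ℝ (Fin d))‖ ≤ η * ‖w‖ * Real.sin θ := by
  classical
  -- the finite set of all possible vectors `g x`
  set G : Finset (EuclideanSpace ℝ (Fin d)) :=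
    ((swapCond_finite k r).image (gMap s)).toFinset with hG
  -- a constant for each subset of `G`
  have hkey := fun T : Finset (EuclideanSpace ℝ (Fin d)) =>
    norm_orthogonalProjection_span_le T
  set Cf : Finset (EuclideanSpace ℝ (Fin d)) → ℝ := fun T => (hkey T).choose with hCf
  have hCfpos : ∀ T, 0 < Cf T := fun T => (hkey T).choose_spec.1
  have hCfspec := fun T => (hkey T).choose_spec.2
  set η : ℝ := G.powerset.sup' ⟨∅, Finset.empty_mem_powerset _⟩ Cf with hη
  have hηpos : 0 < η := lt_of_lt_of_le (hCfpos ∅)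
    (Finset.le_sup' Cf (Finset.empty_mem_powerset _))
  refine ⟨η, hηpos, fun w hw θ hθ1 hθ2 => ?_⟩
  have hsinpos : 0 < Real.sin θ :=
    Real.sin_pos_of_pos_of_lt_pi hθ1 (by linarith [Real.pi_pos])
  set P : EuclideanSpace ℝ (Fin d) → Prop :=
    fun v => ∃ x, SwapCond k r x ∧ sinAngle s w x < Real.sin θ ∧ v = gMap s x with hP
  set T : Finset (EuclideanSpace ℝ (Fin d)) := G.filter P with hTdef
  have hsets : {v : EuclideanSpace ℝ (Fin d) | P v} = (T : Set (EuclideanSpace ℝ (Fin d))) := by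
    ext v
    simp only [Set.mem_setOf_eq, hTdef, Finset.coe_filter, Set.mem_setOf_eq]
    constructor
    · intro hv
      refine ⟨?_, hv⟩
      obtain ⟨x, hx1, _, hx3⟩ := hv
      rw [hG, Set.Finite.mem_toFinset]
      exact ⟨x, hx1, hx3.symm⟩
    · exact fun hv => hv.2
  have hTG : T ∈ G.powerset := Finset.mem_powerset.2 (Finset.filter_subset _ _)
  have hhyp : ∀ v ∈ T, |⟪v, w⟫| ≤ Real.sin θ * (‖v‖ * ‖w‖) := by
    intro v hv
    obtain ⟨x, _, hx2, hx3⟩ := (Finset.mem_filter.1 hv).2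
    by_cases hg : gMap s x = 0
    · rw [hx3, hg]
      simp
    · have hgn : 0 < ‖gMap s x‖ := norm_pos_iff.2 hg
      have hwn : 0 < ‖w‖ := norm_pos_iff.2 hw
      have := (div_lt_iff₀ (by positivity)).1 hx2
      rw [hx3]
      exact le_of_lt this
  have hmain := hCfspec T w (Real.sin θ) (le_of_lt hsinpos) hhyp
  rw [hsets]
  calc ‖(Submodule.orthogonalProjection (Submodule.span ℝ (T : Set (EuclideanSpace ℝ (Fin d)))) w :
        EuclideanSpace ℝ (Fin d))‖ ≤ Cf T * Real.sin θ * ‖w‖ := hmain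
    _ ≤ η * Real.sin θ * ‖w‖ :=
        mul_le_mul_of_nonneg_right (mul_le_mul_of_nonneg_right
          (Finset.le_sup' Cf hTG) (le_of_lt hsinpos)) (norm_nonneg w)
    _ = η * ‖w‖ * Real.sin θ := by ring
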